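/- Let X be a compact Hausdorff space and 𝒜 a function algebra on X, and let A be a maximal set of antisymmetry of 𝒜. Then the restriction algebra 𝒜|_A = {u|_A : u ∈ 𝒜} is a closed subset of C(A, ℂ) (continuous complex-valued functions on the compact space A with the supremum norm). -/

import Mathlib

variable {X : Type*} [TopologicalSpace X] [CompactSpace X] [T2Space X]

/-- A function algebra on a compact Hausdorff space `X`: a closed subalgebra of `C(X, ℂ)`
(it contains the constants, being a subalgebra) which separates the points of `X`. -/
def IsFunctionAlgebra (𝒜 : Subalgebra ℂ C(X, ℂ)) : Prop :=
  IsClosed (𝒜 : Set C(X, ℂ)) ∧ ∀ x y : X, x ≠ y → ∃ u ∈ 𝒜, u x ≠ u y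

/-- `S` is a set of antisymmetry of `𝒜` if every `u ∈ 𝒜` which is real valued on `S`
is constant on `S`. -/
def IsAntisymmetrySet (𝒜 : Subalgebra ℂ C(X, ℂ)) (S : Set X) : Prop :=
  ∀ u ∈ 𝒜, (∀ x ∈ S, (u x).im = 0) → ∀ x ∈ S, ∀ y ∈ S, u x = u y

/-- A maximal set of antisymmetry: a set of antisymmetry not properly contained in any
other set of antisymmetry. -/
def IsMaximalAntisymmetrySet (𝒜 : Subalgebra ℂ C(X, ℂ)) (S : Set X) : Prop :=
  IsAntisymmetrySet 𝒜 S ∧ ∀ S', IsAntisymmetrySet 𝒜 S' → S ⊆ S' → S' = S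

open Set Metric

/-- Bernstein-type estimate, lower part. -/
lemma bern_low {t : ℝ} (h0 : 0 ≤ t) (h1 : t ≤ 1/3) (n : ℕ) :
    1 - (2/3 : ℝ)^n ≤ (1 - t^n)^(2^n) := by
  have htn1 : t ^ n ≤ 1 := pow_le_one₀ h0 (by linarith)
  have hb := one_add_mul_le_pow (a := -t^n) (by linarith) (2^n)
  have h2 : ((2:ℕ)^n : ℝ) * t^n ≤ (2/3 : ℝ)^n := by
    push_cast
    rw [← mul_pow]
    exact pow_le_pow_left₀ (by linarith) (by linarith) n
  have h3 : (1:ℝ) - ((2:ℕ)^n : ℝ) * t^n ≤ (1 - t^n)^(2^n) := by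
    simpa [sub_eq_add_neg, mul_neg] using hb
  push_cast at h2 h3
  linarith

/-- Bernstein-type estimate, upper part. -/
lemma bern_high {t : ℝ} (h1 : t ≤ 1) (h2 : 2/3 ≤ t) (n : ℕ) :
    (1 - t^n)^(2^n) ≤ (3/4 : ℝ)^n := by
  set s : ℝ := t ^ n with hs
  have hs0 : 0 ≤ s := pow_nonneg (by linarith) n
  have hs1 : s ≤ 1 := pow_le_one₀ (by linarith) h1
  have hr0 : (0:ℝ) ≤ (1 - s)^(2^n) := pow_nonneg (by linarith) _
  have hM : ((4:ℝ)/3)^n ≤ ((2:ℕ)^n : ℝ) * s := by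
    push_cast
    rw [← mul_pow]
    exact pow_le_pow_left₀ (by norm_num) (by linarith) n
  have hb : (1:ℝ) + (2^n : ℕ) * s ≤ (1 + s)^(2^n) := one_add_mul_le_pow (by linarith) _
  have key : ((1:ℝ) + (2^n : ℕ) * s) * (1 - s)^(2^n) ≤ 1 := by
    calc ((1:ℝ) + (2^n : ℕ) * s) * (1 - s)^(2^n)
        ≤ (1 + s)^(2^n) * (1 - s)^(2^n) := by
          apply mul_le_mul_of_nonneg_right hb hr0
      _ = ((1+s)*(1-s))^(2^n) := (mul_pow _ _ _).symm
      _ = (1 - s^2)^(2^n) := by ring_nf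
      _ ≤ 1 := pow_le_one₀ (by nlinarith) (by nlinarith)
  have hMpos : (0:ℝ) < ((4:ℝ)/3)^n := pow_pos (by norm_num) n
  have h34 : ((3:ℝ)/4)^n = (((4:ℝ)/3)^n)⁻¹ := by
    rw [← inv_pow]; norm_num
  rw [h34, inv_eq_one_div, le_div_iff₀ hMpos]
  calc (1 - s)^(2^n) * (4/3)^n ≤ (1 - s)^(2^n) * (((2:ℕ)^n : ℝ) * s) := by
        apply mul_le_mul_of_nonneg_left hM hr0
    _ ≤ 1 := by push_cast at key ⊢; nlinarith [key, hr0]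

open Filter Topology in
lemma minimal_critical_antisym
    (𝒜 : Subalgebra ℂ C(X,ℂ)) (W : Set C(X,ℂ))
    (hW : ∀ g₀ ∈ W, ∀ g₁ ∈ W, ∀ h ∈ 𝒜, g₁ + h * (g₀ - g₁) ∈ W)
    (f : C(X,ℂ)) (d : ℝ)
    (E : Set X) (hEc : IsClosed E)
    (hcrit : ∀ g ∈ W, ∃ x ∈ E, d ≤ ‖(f - g) x‖)
    (hmin : ∀ F : Set X, IsClosed F → (∀ g ∈ W, ∃ x ∈ F, d ≤ ‖(f - g) x‖) → F ⊆ E → F = E) :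
    IsAntisymmetrySet 𝒜 E := by
  intro u hu hreal
  by_contra hne
  push_neg at hne
  obtain ⟨p, hp, q, hq, hpq⟩ := hne
  have huR : ∀ x ∈ E, u x = ((u x).re : ℂ) := by
    intro x hx
    exact Complex.ext (by simp) (by simp [hreal x hx])
  set φ : X → ℝ := fun x => (u x).re with hφdef
  have hφc : Continuous φ := Complex.continuous_re.comp u.continuous
  have hEcp : IsCompact E := hEc.isCompact
  obtain ⟨p', hp', hminφ⟩ := hEcp.exists_isMinOn ⟨p, hp⟩ hφc.continuousOn
  obtain ⟨q', hq', hmaxφ⟩ := hEcp.exists_isMaxOn ⟨p, hp⟩ hφc.continuousOn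
  have hmin' : ∀ y ∈ E, φ p' ≤ φ y := fun y hy => hminφ hy
  have hmax' : ∀ y ∈ E, φ y ≤ φ q' := fun y hy => hmaxφ hy
  clear hminφ hmaxφ
  set a := φ p' with ha
  set b := φ q' with hb
  have hpqre : φ p ≠ φ q := fun h => hpq (by rw [huR p hp, huR q hq]; exact_mod_cast h)
  have hab : a < b := by
    rcases lt_or_ge a b with h | h
    · exact h
    · exact absurd (le_antisymm (le_trans (hmax' p hp) (le_trans h (hmin' q hq)))
        (le_trans (hmax' q hq) (le_trans h (hmin' p hp)))) hpqre
  have hba : (0:ℝ) < b - a := by linarith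
  set ψ : X → ℝ := fun x => (φ x - a) / (b - a) with hψdef
  have hψc : Continuous ψ := (hφc.sub continuous_const).div_const _
  have hψ0 : ∀ x ∈ E, 0 ≤ ψ x := fun x hx => div_nonneg (by linarith [hmin' x hx]) hba.le
  have hψ1 : ∀ x ∈ E, ψ x ≤ 1 := fun x hx =>
    (div_le_one hba).mpr (by linarith [hmax' x hx])
  have hψp' : ψ p' = 0 := by simp [hψdef, ← ha]
  have hψq' : ψ q' = 1 := by
    simp only [hψdef]
    exact div_self hba.ne'
  set u' : C(X,ℂ) := ((b:ℂ) - (a:ℂ))⁻¹ • (u - algebraMap ℂ C(X,ℂ) (a:ℂ)) with hu'def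
  have hu'mem : u' ∈ 𝒜 := 𝒜.smul_mem (𝒜.sub_mem hu (𝒜.algebraMap_mem _)) _
  have hbane : ((b:ℂ) - (a:ℂ)) ≠ 0 := by
    rw [← Complex.ofReal_sub]
    exact_mod_cast Complex.ofReal_ne_zero.mpr hba.ne'
  have hu'E : ∀ x ∈ E, u' x = ((ψ x : ℝ) : ℂ) := by
    intro x hx
    have h1 : u' x = ((b:ℂ) - (a:ℂ))⁻¹ * (u x - (a:ℂ)) := by
      simp only [hu'def, ContinuousMap.smul_apply, ContinuousMap.sub_apply, smul_eq_mul]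
      congr 1
    rw [h1, huR x hx]
    simp only [hψdef]
    rw [← Complex.ofReal_sub, ← Complex.ofReal_sub]
    rw [Complex.ofReal_div, Complex.ofReal_sub]
    field_simp
    rfl
  -- the two subsets
  set E₀ : Set X := E ∩ {x | ψ x ≤ 2/3} with hE₀def
  set E₁ : Set X := E ∩ {x | 1/3 ≤ ψ x} with hE₁def
  have hE₀c : IsClosed E₀ := hEc.inter (isClosed_le hψc continuous_const)
  have hE₁c : IsClosed E₁ := hEc.inter (isClosed_le continuous_const hψc)
  have hp'E₀ : p' ∈ E₀ := ⟨hp', by simp only [Set.mem_setOf_eq, hψp']; norm_num⟩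
  have hq'E₁ : q' ∈ E₁ := ⟨hq', by simp only [Set.mem_setOf_eq, hψq']; norm_num⟩
  have hq'nE₀ : q' ∉ E₀ := fun h => by
    have := h.2; rw [Set.mem_setOf_eq, hψq'] at this; norm_num at this
  have hp'nE₁ : p' ∉ E₁ := fun h => by
    have := h.2; rw [Set.mem_setOf_eq, hψp'] at this; norm_num at this
  have hE₀ne : E₀ ≠ E := fun h => hq'nE₀ (h.symm ▸ hq')
  have hE₁ne : E₁ ≠ E := fun h => hp'nE₁ (h.symm ▸ hp')
  have hg₀ex : ∃ g₀ ∈ W, ∀ x ∈ E₀, ‖(f - g₀) x‖ < d := by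
    by_contra hcon
    push_neg at hcon
    exact hE₀ne (hmin E₀ hE₀c (fun g hg => by
      obtain ⟨x, hx, hxd⟩ := hcon g hg; exact ⟨x, hx, hxd⟩) Set.inter_subset_left)
  have hg₁ex : ∃ g₁ ∈ W, ∀ x ∈ E₁, ‖(f - g₁) x‖ < d := by
    by_contra hcon
    push_neg at hcon
    exact hE₁ne (hmin E₁ hE₁c (fun g hg => by
      obtain ⟨x, hx, hxd⟩ := hcon g hg; exact ⟨x, hx, hxd⟩) Set.inter_subset_left)
  obtain ⟨g₀, hg₀W, hg₀⟩ := hg₀ex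
  obtain ⟨g₁, hg₁W, hg₁⟩ := hg₁ex
  obtain ⟨x₀, hx₀, hs₀max⟩ := (hE₀c.isCompact).exists_isMaxOn ⟨p', hp'E₀⟩
    ((f - g₀).continuous.norm.continuousOn)
  obtain ⟨x₁, hx₁, hs₁max⟩ := (hE₁c.isCompact).exists_isMaxOn ⟨q', hq'E₁⟩
    ((f - g₁).continuous.norm.continuousOn)
  set s₀ := ‖(f - g₀) x₀‖ with hs₀def
  set s₁ := ‖(f - g₁) x₁‖ with hs₁def
  have hs₀d : s₀ < d := hg₀ x₀ hx₀
  have hs₁d : s₁ < d := hg₁ x₁ hx₁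
  set s := max s₀ s₁ with hsdef
  have hs0 : 0 ≤ s := le_trans (norm_nonneg _) (le_max_left _ _)
  have hsd : s < d := max_lt hs₀d hs₁d
  set C : ℝ := ‖f - g₀‖ + ‖f - g₁‖ + 1 with hCdef
  have hC0 : (0:ℝ) ≤ C := by positivity
  have hC₀ : ∀ x, ‖(f - g₀) x‖ ≤ C := fun x => by
    have := (f - g₀).norm_coe_le_norm x
    have := norm_nonneg (f - g₁); linarith
  have hC₁ : ∀ x, ‖(f - g₁) x‖ ≤ C := fun x => by
    have := (f - g₁).norm_coe_le_norm x
    have := norm_nonneg (f - g₀); linarith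
  have hds : 0 < d - s := by linarith
  have htend : Tendsto (fun n : ℕ => (3/4:ℝ)^n * C) atTop (𝓝 0) := by
    have := (tendsto_pow_atTop_nhds_zero_of_lt_one (by norm_num : (0:ℝ) ≤ 3/4)
      (by norm_num : (3/4:ℝ) < 1)).mul_const C
    simpa using this
  obtain ⟨n, hn⟩ := (htend.eventually (gt_mem_nhds hds)).exists
  -- hn : (3/4)^n * C < d - s
  set hmap : C(X,ℂ) := (1 - u'^n)^(2^n) with hhdef
  have hhmem : hmap ∈ 𝒜 := pow_mem (𝒜.sub_mem (𝒜.one_mem) (pow_mem hu'mem n)) _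
  have hhE : ∀ x ∈ E, hmap x = (((1 - ψ x ^ n)^(2^n) : ℝ) : ℂ) := by
    intro x hx
    have : hmap x = (1 - (u' x)^n)^(2^n) := by
      simp [hhdef]
    rw [this, hu'E x hx]
    push_cast
    ring
  set g : C(X,ℂ) := g₁ + hmap * (g₀ - g₁) with hgdef
  have hgW : g ∈ W := hW g₀ hg₀W g₁ hg₁W hmap hhmem
  obtain ⟨x, hxE, hxd⟩ := hcrit g hgW
  -- now derive the contradiction: ‖(f - g) x‖ < d
  set t := ψ x with htdef
  have ht0 : 0 ≤ t := hψ0 x hxE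
  have ht1 : t ≤ 1 := hψ1 x hxE
  set r : ℝ := (1 - t^n)^(2^n) with hrdef
  have htn0 : 0 ≤ t^n := pow_nonneg ht0 n
  have htn1 : t^n ≤ 1 := pow_le_one₀ ht0 ht1
  have hr0 : 0 ≤ r := pow_nonneg (by linarith) _
  have hr1 : r ≤ 1 := pow_le_one₀ (by linarith) (by linarith)
  have hhx : hmap x = ((r:ℝ):ℂ) := hhE x hxE
  have hnorm_h : ‖hmap x‖ = r := by rw [hhx, Complex.norm_real]; exact Real.norm_of_nonneg hr0
  have hnorm_1h : ‖1 - hmap x‖ = 1 - r := by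
    rw [hhx, show (1:ℂ) - ((r:ℝ):ℂ) = (((1 - r : ℝ)):ℂ) by push_cast; ring,
      Complex.norm_real]
    exact Real.norm_of_nonneg (by linarith)
  have hdecomp : (f - g) x = (1 - hmap x) * ((f - g₁) x) + hmap x * ((f - g₀) x) := by
    simp only [hgdef, ContinuousMap.sub_apply, ContinuousMap.add_apply,
      ContinuousMap.mul_apply]
    ring
  have hbound : ‖(f - g) x‖ ≤ (1 - r) * ‖(f - g₁) x‖ + r * ‖(f - g₀) x‖ := by
    rw [hdecomp]
    calc ‖(1 - hmap x) * ((f - g₁) x) + hmap x * ((f - g₀) x)‖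
        ≤ ‖(1 - hmap x) * ((f - g₁) x)‖ + ‖hmap x * ((f - g₀) x)‖ := norm_add_le _ _
      _ = (1 - r) * ‖(f - g₁) x‖ + r * ‖(f - g₀) x‖ := by
          rw [norm_mul, norm_mul, hnorm_h, hnorm_1h]
  have h23 : ((2:ℝ)/3)^n ≤ (3/4)^n := pow_le_pow_left₀ (by norm_num) (by norm_num) n
  have hfinal : ‖(f - g) x‖ < d := by
    rcases le_or_gt t (1/3) with hc1 | hc1
    · -- x ∈ E₀, 1 - r small
      have hxE₀ : x ∈ E₀ := ⟨hxE, by simpa using by linarith⟩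
      have h1 : ‖(f - g₀) x‖ ≤ s₀ := hs₀max hxE₀
      have h2 : 1 - r ≤ (2/3:ℝ)^n := by
        have := bern_low ht0 hc1 n; simp only [← hrdef] at this; linarith
      have h3 : (1 - r) * ‖(f - g₁) x‖ ≤ (3/4)^n * C := by
        calc (1 - r) * ‖(f - g₁) x‖ ≤ (2/3:ℝ)^n * C :=
              mul_le_mul h2 (hC₁ x) (norm_nonneg _) (by positivity)
          _ ≤ (3/4)^n * C := mul_le_mul_of_nonneg_right h23 hC0
      have h4 : r * ‖(f - g₀) x‖ ≤ s := by
        calc r * ‖(f - g₀) x‖ ≤ 1 * s₀ :=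
              mul_le_mul hr1 h1 (norm_nonneg _) zero_le_one
          _ = s₀ := one_mul _
          _ ≤ s := le_max_left _ _
      linarith only [hbound, h3, h4, hn, hsd]
    rcases le_or_gt (2/3 : ℝ) t with hc2 | hc2
    · -- x ∈ E₁, r small
      have hxE₁ : x ∈ E₁ := ⟨hxE, by simpa using by linarith⟩
      have h1 : ‖(f - g₁) x‖ ≤ s₁ := hs₁max hxE₁
      have h2 : r ≤ (3/4:ℝ)^n := bern_high ht1 hc2 n
      have h3 : r * ‖(f - g₀) x‖ ≤ (3/4)^n * C :=
        mul_le_mul h2 (hC₀ x) (norm_nonneg _) (by positivity)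
      have h4 : (1 - r) * ‖(f - g₁) x‖ ≤ s := by
        calc (1 - r) * ‖(f - g₁) x‖ ≤ 1 * s₁ :=
              mul_le_mul (by linarith) h1 (norm_nonneg _) zero_le_one
          _ = s₁ := one_mul _
          _ ≤ s := le_max_right _ _
      linarith only [hbound, h3, h4, hn, hsd]
    · -- middle zone: x ∈ E₀ ∩ E₁
      have hxE₀ : x ∈ E₀ := ⟨hxE, by simpa using by linarith⟩
      have hxE₁ : x ∈ E₁ := ⟨hxE, by simpa using by linarith⟩
      have h1 : ‖(f - g₀) x‖ ≤ s := le_trans (hs₀max hxE₀) (le_max_left _ _)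
      have h2 : ‖(f - g₁) x‖ ≤ s := le_trans (hs₁max hxE₁) (le_max_right _ _)
      have h3 : r * ‖(f - g₀) x‖ ≤ r * s := mul_le_mul_of_nonneg_left h1 hr0
      have h4 : (1 - r) * ‖(f - g₁) x‖ ≤ (1 - r) * s :=
        mul_le_mul_of_nonneg_left h2 (by linarith only [hr1])
      have h5 : r * s + (1 - r) * s = s := by ring
      linarith only [hbound, h3, h4, h5, hsd]
  exact absurd hxd (not_le.mpr hfinal)

lemma key_approx
    (𝒜 : Subalgebra ℂ C(X, ℂ)) (A : Set X)
    (hA : IsAntisymmetrySet 𝒜 A)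
    (hAmax : ∀ S', IsAntisymmetrySet 𝒜 S' → A ⊆ S' → S' = A)
    (f : C(X, ℂ)) (hf : f ∈ 𝒜) (c : ℝ) (hc : 0 ≤ c) (hfc : ∀ x ∈ A, ‖f x‖ ≤ c)
    (ε : ℝ) (hε : 0 < ε) :
    ∃ g ∈ 𝒜, (∀ x ∈ A, g x = f x) ∧ ‖g‖ ≤ c + ε := by
  classical
  set W : Set C(X,ℂ) := {w | w ∈ 𝒜 ∧ ∀ x ∈ A, w x = 0} with hWdef
  have h0W : (0 : C(X,ℂ)) ∈ W := ⟨𝒜.zero_mem, fun x _ => rfl⟩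
  have hWne : W.Nonempty := ⟨0, h0W⟩
  set d := Metric.infDist f W with hddef
  have hd0 : 0 ≤ d := Metric.infDist_nonneg
  have hWcomb : ∀ g₀ ∈ W, ∀ g₁ ∈ W, ∀ h ∈ 𝒜, g₁ + h * (g₀ - g₁) ∈ W := by
    rintro g₀ ⟨hg₀A, hg₀0⟩ g₁ ⟨hg₁A, hg₁0⟩ h hh
    refine ⟨𝒜.add_mem hg₁A (𝒜.mul_mem hh (𝒜.sub_mem hg₀A hg₁A)), fun x hx => ?_⟩
    simp [ContinuousMap.add_apply, ContinuousMap.mul_apply, ContinuousMap.sub_apply,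
      hg₀0 x hx, hg₁0 x hx]
  have hmain : d ≤ c := by
    by_contra hcd
    push_neg at hcd
    have hdpos : 0 < d := lt_of_le_of_lt hc hcd
    have hXne : Nonempty X := by
      by_contra hX
      rw [not_nonempty_iff] at hX
      have h1 : d ≤ dist f 0 := Metric.infDist_le_dist_of_mem h0W
      rw [dist_zero_right] at h1
      have h2 : ‖f‖ ≤ 0 := ((ContinuousMap.norm_le f le_rfl).mpr (fun x => isEmptyElim x))
      linarith
    set S : Set (Set X) := {E | IsClosed E ∧ ∀ w ∈ W, ∃ x ∈ E, d ≤ ‖(f - w) x‖} with hSdef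
    have huniv : Set.univ ∈ S := by
      refine ⟨isClosed_univ, fun w hw => ?_⟩
      obtain ⟨x, -, hx⟩ := isCompact_univ.exists_isMaxOn
        ⟨Classical.arbitrary X, Set.mem_univ _⟩ ((f - w).continuous.norm.continuousOn)
      refine ⟨x, Set.mem_univ x, ?_⟩
      have h1 : ‖f - w‖ ≤ ‖(f - w) x‖ :=
        (ContinuousMap.norm_le _ (norm_nonneg _)).mpr (fun y => hx (Set.mem_univ y))
      have h2 : d ≤ dist f w := Metric.infDist_le_dist_of_mem hw
      rw [dist_eq_norm] at h2
      linarith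
    have hchain : ∀ c' ⊆ S, IsChain (· ⊆ ·) c' → c'.Nonempty →
        ∃ lb ∈ S, ∀ s ∈ c', lb ⊆ s := by
      intro c' hc'S hc'chain hc'ne
      refine ⟨⋂₀ c', ⟨isClosed_sInter (fun E hE => (hc'S hE).1), ?_⟩,
        fun s hs => Set.sInter_subset_of_mem hs⟩
      intro w hw
      haveI : Nonempty c' := hc'ne.to_subtype
      set t : c' → Set X := fun E => E.1 ∩ {x | d ≤ ‖(f - w) x‖} with htdef
      have hYc : IsClosed {x | d ≤ ‖(f - w) x‖} :=
        isClosed_le continuous_const ((f - w).continuous.norm)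
      have hdir : Directed (· ⊇ ·) t := by
        intro E F
        rcases hc'chain.total E.2 F.2 with h | h
        · exact ⟨E, subset_rfl, Set.inter_subset_inter_left _ h⟩
        · exact ⟨F, Set.inter_subset_inter_left _ h, subset_rfl⟩
      have hne : ∀ E : c', (t E).Nonempty := by
        intro E
        obtain ⟨x, hxE, hxd⟩ := (hc'S E.2).2 w hw
        exact ⟨x, hxE, hxd⟩
      have hcl : ∀ E : c', IsClosed (t E) := fun E => ((hc'S E.2).1).inter hYc
      have hcp : ∀ E : c', IsCompact (t E) := fun E => (hcl E).isCompact
      obtain ⟨x, hx⟩ :=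
        IsCompact.nonempty_iInter_of_directed_nonempty_isCompact_isClosed t hdir hne hcp hcl
      refine ⟨x, ?_, ?_⟩
      · exact Set.mem_sInter.mpr (fun E hE => (Set.mem_iInter.mp hx ⟨E, hE⟩).1)
      · exact (Set.mem_iInter.mp hx (Classical.arbitrary c')).2
    obtain ⟨E, _, hEmin⟩ := zorn_superset_nonempty S hchain Set.univ huniv
    have hES : E ∈ S := hEmin.prop
    have hEclosed : IsClosed E := hES.1
    have hEcrit : ∀ w ∈ W, ∃ x ∈ E, d ≤ ‖(f - w) x‖ := hES.2
    have hEminimal : ∀ F : Set X, IsClosed F →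
        (∀ w ∈ W, ∃ x ∈ F, d ≤ ‖(f - w) x‖) → F ⊆ E → F = E :=
      fun F h1 h2 h3 => h3.antisymm (hEmin.2 ⟨h1, h2⟩ h3)
    have hEanti : IsAntisymmetrySet 𝒜 E :=
      minimal_critical_antisym 𝒜 W hWcomb f d E hEclosed hEcrit hEminimal
    by_cases hEA : IsAntisymmetrySet 𝒜 (E ∪ A)
    · have hEA' : E ∪ A = A := hAmax _ hEA Set.subset_union_right
      have hEsub : E ⊆ A := by
        rw [← hEA']; exact Set.subset_union_left
      obtain ⟨x, hxE, hxd⟩ := hEcrit 0 h0W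
      have h1 : ‖(f - 0) x‖ = ‖f x‖ := by simp
      rw [h1] at hxd
      exact absurd (le_trans hxd (hfc x (hEsub hxE))) (not_le.mpr hcd)
    · rw [IsAntisymmetrySet] at hEA
      push_neg at hEA
      obtain ⟨u, hu, hureal, x', hx', y', hy', hxy'⟩ := hEA
      have hconstE : ∀ x ∈ E, ∀ y ∈ E, u x = u y :=
        hEanti u hu (fun x hx => hureal x (Or.inl hx))
      have hconstA : ∀ x ∈ A, ∀ y ∈ A, u x = u y :=
        hA u hu (fun x hx => hureal x (Or.inr hx))
      have hex : ∃ e ∈ E, ∃ a0 ∈ A, u e ≠ u a0 := by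
        rcases hx' with hx'E | hx'A <;> rcases hy' with hy'E | hy'A
        · exact absurd (hconstE _ hx'E _ hy'E) hxy'
        · exact ⟨x', hx'E, y', hy'A, hxy'⟩
        · exact ⟨y', hy'E, x', hx'A, fun h => hxy' h.symm⟩
        · exact absurd (hconstA _ hx'A _ hy'A) hxy'
      obtain ⟨e, heE, a0, ha0, hea⟩ := hex
      set v : C(X,ℂ) := (u e - u a0)⁻¹ • (u - algebraMap ℂ C(X,ℂ) (u a0)) with hv
      have hvmem : v ∈ 𝒜 := 𝒜.smul_mem (𝒜.sub_mem hu (𝒜.algebraMap_mem _)) _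
      have hvA : ∀ x ∈ A, v x = 0 := by
        intro x hx
        have : u x = u a0 := hconstA x hx a0 ha0
        simp [hv, ContinuousMap.smul_apply, ContinuousMap.sub_apply, this]
      have hvE : ∀ x ∈ E, v x = 1 := by
        intro x hx
        have h1 : u x = u e := hconstE x hx e heE
        simp only [hv, ContinuousMap.smul_apply, ContinuousMap.sub_apply, smul_eq_mul, h1]
        rw [show (algebraMap ℂ C(X,ℂ) (u a0)) x = u a0 from rfl]
        exact inv_mul_cancel₀ (sub_ne_zero.mpr hea)
      have hfv : f * v ∈ W :=
        ⟨𝒜.mul_mem hf hvmem, fun x hx => by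
          simp [ContinuousMap.mul_apply, hvA x hx]⟩
      obtain ⟨x, hxE, hxd⟩ := hEcrit (f * v) hfv
      have h1 : (f - f * v) x = 0 := by
        simp [ContinuousMap.sub_apply, ContinuousMap.mul_apply, hvE x hxE]
      rw [h1] at hxd
      simp at hxd
      linarith
  have hlt : d < c + ε := by linarith
  obtain ⟨w, hwW, hw⟩ := (Metric.infDist_lt_iff hWne).mp hlt
  refine ⟨f - w, 𝒜.sub_mem hf hwW.1, fun x hx => ?_, ?_⟩
  · simp [ContinuousMap.sub_apply, hwW.2 x hx]
  · rw [dist_eq_norm] at hw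
    exact le_of_lt hw

lemma maximal_antisym_isClosed (𝒜 : Subalgebra ℂ C(X, ℂ)) (A : Set X)
    (hA1 : IsAntisymmetrySet 𝒜 A)
    (hA2 : ∀ S', IsAntisymmetrySet 𝒜 S' → A ⊆ S' → S' = A) : IsClosed A := by
  have hclos : IsAntisymmetrySet 𝒜 (closure A) := by
    intro u hu hreal
    have hrealA : ∀ x ∈ A, (u x).im = 0 := fun x hx => hreal x (subset_closure hx)
    have hconst := hA1 u hu hrealA
    intro x hx y hy
    rcases A.eq_empty_or_nonempty with hAe | ⟨a, ha⟩
    · rw [hAe, closure_empty] at hx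
      exact absurd hx (Set.notMem_empty x)
    · have hsub : closure A ⊆ {z | u z = u a} :=
        closure_minimal (fun w hw => hconst w hw a ha)
          (isClosed_eq u.continuous continuous_const)
      rw [hsub hx, hsub hy]
  have := hA2 (closure A) hclos subset_closure
  rw [← this]
  exact isClosed_closure


open Filter Topology in
/-- For a maximal set of antisymmetry `A` of a function algebra `𝒜`, the restriction algebra
`𝒜|_A = {u|_A : u ∈ 𝒜}` is closed in `C(A, ℂ)`. -/
theorem restriction_to_maximal_antisymmetrySet_isClosed
    (𝒜 : Subalgebra ℂ C(X, ℂ)) (h𝒜 : IsFunctionAlgebra 𝒜)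
    (A : Set X) (hA : IsMaximalAntisymmetrySet 𝒜 A) :
    IsClosed ((fun u : C(X, ℂ) => u.restrict A) '' (𝒜 : Set C(X, ℂ))) := by
  classical
  obtain ⟨hAanti, hAmax⟩ := hA
  have hAclosed : IsClosed A := maximal_antisym_isClosed 𝒜 A hAanti hAmax
  haveI : CompactSpace ↥A := isCompact_iff_compactSpace.mp hAclosed.isCompact
  set T : C(X,ℂ) → C(↥A,ℂ) := fun u => u.restrict A with hTdef
  have hTsub : ∀ u v : C(X,ℂ), T u - T v = T (u - v) := by
    intro u v; ext x; simp [hTdef, ContinuousMap.restrict_apply]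
  have hTnorm : ∀ u : C(X,ℂ), ‖T u‖ ≤ ‖u‖ := by
    intro u
    refine (ContinuousMap.norm_le _ (norm_nonneg _)).mpr (fun x => ?_)
    exact u.norm_coe_le_norm x.val
  have hTlip : LipschitzWith 1 T := by
    apply LipschitzWith.mk_one
    intro u v
    rw [dist_eq_norm, dist_eq_norm, hTsub]
    exact hTnorm _
  apply isClosed_of_closure_subset
  intro G hG
  -- choose approximating sequence
  have hsel : ∀ k : ℕ, ∃ u, u ∈ (𝒜 : Set C(X,ℂ)) ∧ dist G (T u) < (1/2 : ℝ)^k := by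
    intro k
    obtain ⟨b, hbS, hb⟩ := Metric.mem_closure_iff.mp hG ((1/2 : ℝ)^k) (by positivity)
    obtain ⟨u, hu𝒜, rfl⟩ := hbS
    exact ⟨u, hu𝒜, hb⟩
  choose u hu𝒜 hud using hsel
  -- correct the differences using key_approx
  have hsel2 : ∀ k : ℕ, ∃ g, g ∈ 𝒜 ∧ (∀ x ∈ A, g x = (u (k+1) - u k) x) ∧
      ‖g‖ ≤ (3 : ℝ) * (1/2)^k := by
    intro k
    have hck : (0:ℝ) ≤ (1/2)^k + (1/2)^(k+1) := by positivity
    have hbd : ∀ x ∈ A, ‖(u (k+1) - u k) x‖ ≤ (1/2 : ℝ)^k + (1/2)^(k+1) := by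
      intro x hx
      have h1 : (u (k+1) - u k) x = (T (u (k+1)) - T (u k)) ⟨x, hx⟩ := by
        simp [hTdef, ContinuousMap.restrict_apply]
      rw [h1]
      have h2 : ‖(T (u (k+1)) - T (u k)) ⟨x, hx⟩‖ ≤ ‖T (u (k+1)) - T (u k)‖ :=
        (T (u (k+1)) - T (u k)).norm_coe_le_norm _
      have h3 : ‖T (u (k+1)) - T (u k)‖ ≤ (1/2 : ℝ)^(k+1) + (1/2)^k := by
        have := dist_triangle (T (u (k+1))) G (T (u k))
        rw [dist_eq_norm] at this
        have h4 := hud (k+1)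
        have h5 := hud k
        rw [dist_comm] at h4
        calc ‖T (u (k+1)) - T (u k)‖ ≤ dist (T (u (k+1))) G + dist G (T (u k)) := this
          _ ≤ (1/2 : ℝ)^(k+1) + (1/2)^k := by
              have := le_of_lt h4; have := le_of_lt h5; linarith [le_of_lt h4, le_of_lt h5]
      linarith
    obtain ⟨g, hg𝒜, hgA, hgn⟩ := key_approx 𝒜 A hAanti hAmax (u (k+1) - u k)
      (𝒜.sub_mem (hu𝒜 (k+1)) (hu𝒜 k)) _ hck hbd ((1/2 : ℝ)^k) (by positivity)
    refine ⟨g, hg𝒜, hgA, ?_⟩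
    have : (1/2 : ℝ)^(k+1) ≤ (1/2)^k := by
      apply pow_le_pow_of_le_one (by norm_num) (by norm_num)
      omega
    linarith
  choose g hg𝒜 hgA hgnorm using hsel2
  -- the corrected series
  have hsumnorm : Summable (fun k => ‖g k‖) := by
    apply Summable.of_nonneg_of_le (fun k => norm_nonneg _) hgnorm
    exact (summable_geometric_of_lt_one (by norm_num) (by norm_num)).mul_left 3
  have hsum : Summable g := hsumnorm.of_norm
  set V : C(X,ℂ) := u 0 + ∑' k, g k with hVdef
  set P : ℕ → C(X,ℂ) := fun K => u 0 + ∑ k ∈ Finset.range K, g k with hPdef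
  have hPtend : Tendsto P atTop (𝓝 V) := by
    exact (hsum.hasSum.tendsto_sum_nat).const_add (u 0)
  have hV𝒜 : V ∈ 𝒜 := by
    refine h𝒜.1.mem_of_tendsto hPtend (Filter.Eventually.of_forall (fun K => ?_))
    exact 𝒜.add_mem (hu𝒜 0) (Subalgebra.sum_mem 𝒜 (fun k _ => hg𝒜 k))
  -- T (P K) = T (u K)
  have hTP : ∀ K, T (P K) = T (u K) := by
    intro K
    ext x
    show P K x.val = u K x.val
    have h1 : P K x.val = u 0 x.val + ∑ k ∈ Finset.range K, g k x.val := by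
      simp [hPdef, ContinuousMap.add_apply, ContinuousMap.sum_apply]
    have h2 : ∀ k, g k x.val = u (k+1) x.val - u k x.val := by
      intro k
      rw [hgA k x.val x.property]
      simp [ContinuousMap.sub_apply]
    rw [h1]
    simp only [h2]
    rw [Finset.sum_range_sub (fun k => u k x.val)]
    ring
  -- limits
  have hTu : Tendsto (fun K => T (u K)) atTop (𝓝 G) := by
    rw [tendsto_iff_dist_tendsto_zero]
    apply squeeze_zero (fun K => dist_nonneg)
      (fun K => le_of_lt (by rw [dist_comm]; exact hud K))
    exact tendsto_pow_atTop_nhds_zero_of_lt_one (by norm_num) (by norm_num)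
  have hTV : Tendsto (fun K => T (P K)) atTop (𝓝 (T V)) :=
    (hTlip.continuous.tendsto V).comp hPtend
  rw [funext hTP] at hTV
  have : G = T V := tendsto_nhds_unique hTu hTV
  exact ⟨V, hV𝒜, this.symm⟩
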